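/- Let Σ and Ψ be n×n positive semidefinite matrices with Σ ⪰ Ψ and Ψ⁺ ⪰ Σ⁺, and let Φ := (Σ^{1/2})ᵀ Ψ⁺ Σ^{1/2}. Then rank(Φ) = rank(Σ). -/

import Mathlib

open Matrix

/-- `B` is the Moore–Penrose pseudoinverse of `A`. -/
def IsMoorePenroseInv {n : ℕ} (A B : Matrix (Fin n) (Fin n) ℝ) : Prop :=
  A * B * A = A ∧ B * A * B = B ∧ (A * B)ᵀ = A * B ∧ (B * A)ᵀ = B * A

/-- The square root of a positive semidefinite matrix (removed from Mathlib; old definition). -/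
noncomputable def Matrix.PosSemidef.sqrt {n : Type*} [Fintype n] [DecidableEq n] {A : Matrix n n ℝ}
    (hA : A.PosSemidef) : Matrix n n ℝ :=
  (hA.1.eigenvectorUnitary : Matrix n n ℝ) * diagonal ((↑) ∘ (hA.1.eigenvalues · |>.sqrt)) *
    (star hA.1.eigenvectorUnitary : Matrix n n ℝ)

lemma Matrix.PosSemidef.posSemidef_sqrt {n : Type*} [Fintype n] [DecidableEq n]
    {A : Matrix n n ℝ} (hA : A.PosSemidef) : hA.sqrt.PosSemidef := by
  unfold Matrix.PosSemidef.sqrt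
  have hD : (diagonal ((↑) ∘ (hA.1.eigenvalues · |>.sqrt)) : Matrix n n ℝ).PosSemidef :=
    posSemidef_diagonal_iff.mpr (fun i => by simp [Real.sqrt_nonneg])
  have h := hD.mul_mul_conjTranspose_same (hA.1.eigenvectorUnitary : Matrix n n ℝ)
  simpa [star_eq_conjTranspose] using h

lemma Matrix.PosSemidef.sqrt_mul_self {n : Type*} [Fintype n] [DecidableEq n]
    {A : Matrix n n ℝ} (hA : A.PosSemidef) : hA.sqrt * hA.sqrt = A := by
  unfold Matrix.PosSemidef.sqrt
  set U : Matrix n n ℝ := (hA.1.eigenvectorUnitary : Matrix n n ℝ)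
  have hU : star U * U = 1 := Matrix.UnitaryGroup.star_mul_self _
  set D : Matrix n n ℝ := diagonal ((↑) ∘ (hA.1.eigenvalues · |>.sqrt))
  have hDD : D * D = diagonal (RCLike.ofReal ∘ hA.1.eigenvalues) := by
    simp only [D, diagonal_mul_diagonal]
    congr 1
    funext i
    simp [Real.mul_self_sqrt (hA.eigenvalues_nonneg i)]
  calc U * D * star U * (U * D * star U) = U * D * (star U * U) * D * star U := by
        simp only [mul_assoc]
  _ = U * (D * D) * star U := by rw [hU]; simp only [mul_one, mul_assoc]
  _ = A := by
    rw [hDD]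
    conv_rhs => rw [hA.1.spectral_theorem, Unitary.conjStarAlgAut_apply]

lemma mp_unique {n : ℕ} {A B C : Matrix (Fin n) (Fin n) ℝ}
    (hB : IsMoorePenroseInv A B) (hC : IsMoorePenroseInv A C) : B = C := by
  obtain ⟨b1, b2, b3, b4⟩ := hB
  obtain ⟨c1, c2, c3, c4⟩ := hC
  have hAB : A * B = A * C := by
    calc A * B = (A * C * A) * B := by rw [c1]
    _ = (A * C) * (A * B) := by noncomm_ring
    _ = (A * C)ᵀ * (A * B)ᵀ := by rw [c3, b3]
    _ = Cᵀ * (A * B * A)ᵀ := by simp [transpose_mul, mul_assoc]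
    _ = Cᵀ * Aᵀ := by rw [b1]
    _ = (A * C)ᵀ := by simp [transpose_mul]
    _ = A * C := c3
  have hBA : B * A = C * A := by
    calc B * A = B * (A * C * A) := by rw [c1]
    _ = (B * A) * (C * A) := by noncomm_ring
    _ = (B * A)ᵀ * (C * A)ᵀ := by rw [b4, c4]
    _ = (A * B * A)ᵀ * Cᵀ := by simp [transpose_mul, mul_assoc]
    _ = Aᵀ * Cᵀ := by rw [b1]
    _ = (C * A)ᵀ := by simp [transpose_mul]
    _ = C * A := c4
  calc B = B * A * B := b2.symm
  _ = B * (A * C) := by rw [mul_assoc, hAB]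
  _ = (C * A) * C := by rw [← mul_assoc, hBA]
  _ = C := c2

lemma mp_symm {n : ℕ} {A B : Matrix (Fin n) (Fin n) ℝ}
    (hA : Aᵀ = A) (hB : IsMoorePenroseInv A B) : Bᵀ = B := by
  obtain ⟨b1, b2, b3, b4⟩ := hB
  have : IsMoorePenroseInv A Bᵀ := by
    refine ⟨?_, ?_, ?_, ?_⟩
    · calc A * Bᵀ * A = (Aᵀ * B * Aᵀ)ᵀ := by simp [transpose_mul, mul_assoc]
      _ = A := by rw [hA, b1, hA]
    · calc Bᵀ * A * Bᵀ = (B * Aᵀ * B)ᵀ := by simp [transpose_mul, mul_assoc]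
      _ = Bᵀ := by rw [hA, b2]
    · calc (A * Bᵀ)ᵀ = B * Aᵀ := by simp [transpose_mul]
      _ = (B * A)ᵀ := by rw [hA, b4]
      _ = Aᵀ * Bᵀ := by simp [transpose_mul]
      _ = A * Bᵀ := by rw [hA]
    · calc (Bᵀ * A)ᵀ = Aᵀ * B := by simp [transpose_mul]
      _ = (A * B)ᵀ := by rw [hA, b3]
      _ = Bᵀ * Aᵀ := by simp [transpose_mul]
      _ = Bᵀ * A := by rw [hA]
  exact mp_unique this ⟨b1, b2, b3, b4⟩

lemma rank_le_of_psd {n : ℕ} {A B : Matrix (Fin n) (Fin n) ℝ}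
    (hB : B.PosSemidef) (hAB : (A - B).PosSemidef) : B.rank ≤ A.rank := by
  have hker : LinearMap.ker A.mulVecLin ≤ LinearMap.ker B.mulVecLin := by
    intro x hx
    rw [LinearMap.mem_ker, mulVecLin_apply] at hx ⊢
    have hBx : (0:ℝ) ≤ x ⬝ᵥ B *ᵥ x := by simpa using hB.dotProduct_mulVec_nonneg x
    have hABx : (0:ℝ) ≤ x ⬝ᵥ (A - B) *ᵥ x := by simpa using hAB.dotProduct_mulVec_nonneg x
    have hAx : x ⬝ᵥ A *ᵥ x = 0 := by rw [hx, dotProduct_zero]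
    rw [sub_mulVec, dotProduct_sub, hAx] at hABx
    have : x ⬝ᵥ B *ᵥ x = 0 := le_antisymm (by linarith) hBx
    have := (hB.dotProduct_mulVec_zero_iff x).mp (by simpa using this)
    exact this
  have h1 := LinearMap.finrank_range_add_finrank_ker A.mulVecLin
  have h2 := LinearMap.finrank_range_add_finrank_ker B.mulVecLin
  have h3 := Submodule.finrank_mono hker
  unfold Matrix.rank
  omega

/-- If `Σ ⪰ Ψ ⪰ 0`, `Ψ⁺ ⪰ Σ⁺` and `Φ = (Σ^{1/2})ᵀ Ψ⁺ Σ^{1/2}`, then `rank Φ = rank Σ`. -/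
theorem stmt_2 {n : ℕ} (Sig Psi Sigp Psip : Matrix (Fin n) (Fin n) ℝ)
    (hSig : Sig.PosSemidef) (hPsi : Psi.PosSemidef)
    (hSigp : IsMoorePenroseInv Sig Sigp) (hPsip : IsMoorePenroseInv Psi Psip)
    (hge : (Sig - Psi).PosSemidef) (hgep : (Psip - Sigp).PosSemidef) :
    ((hSig.sqrt)ᵀ * Psip * hSig.sqrt).rank = Sig.rank := by
  set S := hSig.sqrt with hSdef
  have hSpsd : S.PosSemidef := hSig.posSemidef_sqrt
  have hSsym : Sᵀ = S := by
    have h : Sᴴ = S := hSpsd.1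
    rwa [conjTranspose_eq_transpose_of_trivial] at h
  have hSS : S * S = Sig := hSig.sqrt_mul_self
  have hSigSym : Sigᵀ = Sig := by
    have h : Sigᴴ = Sig := hSig.1
    rwa [conjTranspose_eq_transpose_of_trivial] at h
  have hPsiSym : Psiᵀ = Psi := by
    have h : Psiᴴ = Psi := hPsi.1
    rwa [conjTranspose_eq_transpose_of_trivial] at h
  have hSigpSym : Sigpᵀ = Sigp := mp_symm hSigSym hSigp
  have hPsipSym : Psipᵀ = Psip := mp_symm hPsiSym hPsip
  -- Psip and Sigp are PSD
  have hPsipPsd : Psip.PosSemidef := by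
    have h := hPsi.mul_mul_conjTranspose_same Psip
    rwa [conjTranspose_eq_transpose_of_trivial, hPsipSym, hPsip.2.1] at h
  have hSigpPsd : Sigp.PosSemidef := by
    have h := hSig.mul_mul_conjTranspose_same Sigp
    rwa [conjTranspose_eq_transpose_of_trivial, hSigpSym, hSigp.2.1] at h
  set Phi := Sᵀ * Psip * S with hPhidef
  set P := Sᵀ * Sigp * S with hPdef
  have hPpsd : P.PosSemidef := by
    have h := hSigpPsd.mul_mul_conjTranspose_same Sᵀ
    rwa [conjTranspose_eq_transpose_of_trivial, transpose_transpose] at h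
  have hdiff : (Phi - P).PosSemidef := by
    have h := hgep.mul_mul_conjTranspose_same Sᵀ
    rw [conjTranspose_eq_transpose_of_trivial, transpose_transpose] at h
    have : Sᵀ * (Psip - Sigp) * S = Phi - P := by
      rw [hPhidef, hPdef]; noncomm_ring
    rwa [this] at h
  -- rank S = rank Sig
  have hrankS : S.rank = Sig.rank := by
    rw [show Sig = Sᵀ * S from by rw [hSsym, hSS], rank_transpose_mul_self]
  -- upper bound
  have hup : Phi.rank ≤ Sig.rank := by
    rw [← hrankS]; exact rank_mul_le_right _ _
  -- Sig = S * P * S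
  have hSig_eq : S * P * S = Sig := by
    rw [hPdef, hSsym]
    calc S * (S * Sigp * S) * S = (S * S) * Sigp * (S * S) := by noncomm_ring
    _ = Sig := by rw [hSS, hSigp.1]
  have hlow1 : Sig.rank ≤ P.rank := by
    rw [← hSig_eq]
    exact le_trans (rank_mul_le_left _ _) (rank_mul_le_right _ _)
  have hlow2 : P.rank ≤ Phi.rank := rank_le_of_psd hPpsd hdiff
  exact le_antisymm hup (le_trans hlow1 hlow2)
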